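/- Bit-reversal shortening is valid: for N = 2^n and Z = {br(N−S), ..., br(N−1)} where br is the n-bit bit-reversal permutation, every entry G_N(i, z) with i ∉ Z and z ∈ Z equals 0. -/

import Mathlib

open Matrix

/-- The 2×2 polar kernel over `F₂`. -/
def G2 : Matrix (Fin 2) (Fin 2) (ZMod 2) := !![1, 0; 1, 1]

/-- `GN n = G2^{⊗n}`, the `n`-fold Kronecker power of `G2` over `F₂`. -/
def GN : (n : ℕ) → Matrix (Fin (2 ^ n)) (Fin (2 ^ n)) (ZMod 2)
  | 0 => 1
  | n + 1 =>
    Matrix.reindex (finProdFinEquiv.trans (finCongr (by ring)))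
      (finProdFinEquiv.trans (finCongr (by ring)))
      (Matrix.kroneckerMap (· * ·) G2 (GN n))


/-- The `n`-bit bit-reversal permutation on `{0, …, 2^n − 1}`. -/
def br (n k : ℕ) : ℕ := ∑ i ∈ Finset.range n, if k.testBit i then 2 ^ (n - 1 - i) else 0

lemma br_congr {n k k' : ℕ} (h : ∀ i < n, k.testBit i = k'.testBit i) :
    br n k = br n k' := by
  unfold br
  exact Finset.sum_congr rfl fun i hi => by
    rw [h i (Finset.mem_range.mp hi)]

lemma br_mod (n k : ℕ) : br n (k % 2 ^ n) = br n k := by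
  refine br_congr fun i hi => ?_
  rw [Nat.testBit_mod_two_pow]
  simp [hi]

lemma br_succ (n k : ℕ) :
    br (n + 1) k = 2 * br n k + (if k.testBit n then 1 else 0) := by
  unfold br
  rw [Finset.sum_range_succ, Finset.mul_sum]
  congr 1
  · refine Finset.sum_congr rfl fun i hi => ?_
    have hi := Finset.mem_range.mp hi
    have : n + 1 - 1 - i = (n - 1 - i) + 1 := by omega
    rw [this]
    split <;> simp [pow_succ, mul_comm]
  · simp

lemma br_succ' (n k : ℕ) :
    br (n + 1) k = (if k.testBit 0 then 2 ^ n else 0) + br n (k / 2) := by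
  unfold br
  rw [Finset.sum_range_succ', add_comm]
  congr 1
  refine Finset.sum_congr rfl fun i hi => ?_
  rw [Nat.testBit_succ]
  congr 2
  omega

lemma br_lt (n k : ℕ) : br n k < 2 ^ n := by
  induction n generalizing k with
  | zero => simp [br]
  | succ n ih =>
    rw [br_succ]
    have := ih k
    have : (if k.testBit n then 1 else 0) ≤ 1 := by split <;> omega
    rw [pow_succ]
    omega

lemma br_br (n : ℕ) : ∀ k < 2 ^ n, br n (br n k) = k := by
  induction n with
  | zero => intro k hk; interval_cases k; simp [br]
  | succ n ih =>
    intro k hk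
    have hb : (if k.testBit n then 1 else 0) ≤ 1 := by split <;> omega
    rw [br_succ' n (br (n+1) k), br_succ n k]
    have hdiv : (2 * br n k + (if k.testBit n then 1 else 0)) / 2 = br n k := by
      omega
    have hbit0 : (2 * br n k + (if k.testBit n then 1 else 0)).testBit 0
        = k.testBit n := by
      rw [Nat.testBit_zero]
      rcases Nat.testBit k n <;> simp <;> omega
    rw [hdiv, hbit0, ← br_mod n k, ih _ (Nat.mod_lt _ (by positivity))]
    have h2 : k / 2 ^ n < 2 := by
      rw [Nat.div_lt_iff_lt_mul (by positivity)]
      rw [pow_succ] at hk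
      omega
    have hbit : k.testBit n = decide (k / 2 ^ n % 2 = 1) := Nat.testBit_eq_decide_div_mod_eq
    have hmod : k % 2 ^ n + 2 ^ n * (k / 2 ^ n) = k := Nat.mod_add_div k (2 ^ n)
    rw [hbit]
    rcases hh : k / 2 ^ n with _ | m
    · rw [hh] at hmod
      simp
      omega
    · have hm1 : m = 0 := by omega
      subst hm1
      rw [hh] at hmod
      simp
      omega

lemma g2_dom : ∀ a a' : Fin 2, G2 a a' ≠ 0 → a'.val ≤ a.val := by
  intro a a'; fin_cases a <;> fin_cases a' <;> simp [G2]

lemma gn_dom : ∀ n (i z : Fin (2 ^ n)), GN n i z ≠ 0 → br n z.val ≤ br n i.val := by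
  intro n
  induction n with
  | zero => intro i z _; simp [br]
  | succ n ih =>
    intro i z h
    rw [GN, Matrix.reindex_apply, Matrix.submatrix_apply] at h
    set p := (finProdFinEquiv.trans (finCongr (by ring : 2 * 2 ^ n = 2 ^ (n + 1)))).symm i
      with hp
    set q := (finProdFinEquiv.trans (finCongr (by ring : 2 * 2 ^ n = 2 ^ (n + 1)))).symm z
      with hq
    have hent : Matrix.kroneckerMap (· * ·) G2 (GN n) p q
        = G2 p.1 q.1 * GN n p.2 q.2 := rfl
    rw [hent] at h
    have h1 : G2 p.1 q.1 ≠ 0 := left_ne_zero_of_mul h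
    have h2 : GN n p.2 q.2 ≠ 0 := right_ne_zero_of_mul h
    have hih := ih _ _ h2
    have hkey : ∀ (a : Fin 2) (b : Fin (2 ^ n)),
        br (n + 1) (b.val + 2 ^ n * a.val) = 2 * br n b.val + a.val := by
      intro a b
      rw [br_succ]
      have hm : (b.val + 2 ^ n * a.val) % 2 ^ n = b.val := by
        rw [Nat.add_mul_mod_self_left, Nat.mod_eq_of_lt b.isLt]
      have hlow : br n (b.val + 2 ^ n * a.val) = br n b.val := by
        rw [← br_mod n (b.val + 2 ^ n * a.val), hm]
      have hdiv : (b.val + 2 ^ n * a.val) / 2 ^ n = a.val := by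
        rw [Nat.add_mul_div_left _ _ (by positivity), Nat.div_eq_of_lt b.isLt]
        omega
      have hbit : (b.val + 2 ^ n * a.val).testBit n
          = decide (a.val % 2 = 1) := by
        rw [Nat.testBit_eq_decide_div_mod_eq, hdiv]
      rw [hlow, hbit]
      have ha := a.isLt
      rcases (by omega : (a : ℕ) = 0 ∨ (a : ℕ) = 1) with h' | h' <;> rw [h'] <;> norm_num
    have hi : i.val = p.2.val + 2 ^ n * p.1.val := by
      have : i = (finProdFinEquiv.trans (finCongr (by ring : 2 * 2 ^ n = 2 ^ (n + 1)))) p := by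
        rw [hp, Equiv.apply_symm_apply]
      rw [this]
      rfl
    have hz : z.val = q.2.val + 2 ^ n * q.1.val := by
      have : z = (finProdFinEquiv.trans (finCongr (by ring : 2 * 2 ^ n = 2 ^ (n + 1)))) q := by
        rw [hq, Equiv.apply_symm_apply]
      rw [this]
      rfl
    rw [hi, hz, hkey, hkey]
    have hG : q.1.val ≤ p.1.val := g2_dom p.1 q.1 h1
    omega

/-- Bit-reversal shortening is valid: with `N = 2^n` and
`Z = {br(N−S), …, br(N−1)}`, every entry `G_N(i,z)` with `i ∉ Z`, `z ∈ Z` is `0`. -/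
theorem br_shortening_valid (n S : ℕ) (hS : S < 2 ^ n)
    (Z : Set (Fin (2 ^ n)))
    (hZ : Z = {z : Fin (2 ^ n) | ∃ m : ℕ, 2 ^ n - S ≤ m ∧ m < 2 ^ n ∧ br n m = z.val}) :
    ∀ i z : Fin (2 ^ n), i ∉ Z → z ∈ Z → GN n i z = 0 := by
  subst hZ
  intro i z hi hz
  by_contra h
  obtain ⟨m, hm1, hm2, hbr⟩ := hz
  apply hi
  refine ⟨br n i.val, ?_, br_lt n i.val, br_br n i.val i.isLt⟩
  have hdom := gn_dom n i z h
  have : br n z.val = m := by rw [← hbr, br_br n m hm2]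
  omega
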